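/- For a monomial ideal M, the following are equivalent: (1) there exists a graded non-monomial ideal I with mono(I) = M; (3) there exist distinct monomials u₁ ≠ u₂ with u₁, u₂ ∉ M, deg u₁ = deg u₂, and M : u₁ = M : u₂. -/

import Mathlib

open MvPolynomial

/-- A (monic) monomial in a polynomial ring. -/
def IsMonomial {k : Type*} [Field k] {n : ℕ} (f : MvPolynomial (Fin n) k) : Prop :=
  ∃ s : Fin n →₀ ℕ, f = MvPolynomial.monomial s 1

/-- `mono I` is the largest monomial subideal of `I`: the ideal generated by all
monomials contained in `I`. -/
noncomputable def mono {k : Type*} [Field k] {n : ℕ} (I : Ideal (MvPolynomial (Fin n) k)) :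
    Ideal (MvPolynomial (Fin n) k) :=
  Ideal.span {f | IsMonomial f ∧ f ∈ I}

/-- A monomial ideal is one generated by its monomials. -/
def IsMonomialIdeal {k : Type*} [Field k] {n : ℕ} (I : Ideal (MvPolynomial (Fin n) k)) : Prop :=
  mono I = I

/-- The homogeneous maximal ideal `(x₁, …, xₙ)`. -/
noncomputable def maxIdeal (k : Type*) [Field k] (n : ℕ) : Ideal (MvPolynomial (Fin n) k) :=
  Ideal.span (Set.range MvPolynomial.X)

/-- A graded (homogeneous) ideal. -/
def IsHomogeneousIdeal {k : Type*} [Field k] {n : ℕ}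
    (I : Ideal (MvPolynomial (Fin n) k)) : Prop :=
  ∀ f ∈ I, ∀ i : ℕ, MvPolynomial.homogeneousComponent i f ∈ I

section Aux

variable {k : Type*} [Field k] {n : ℕ}

theorem mono_le (I : Ideal (MvPolynomial (Fin n) k)) : mono I ≤ I :=
  Ideal.span_le.2 fun _ hf => hf.2

theorem mono_mono {I J : Ideal (MvPolynomial (Fin n) k)} (h : I ≤ J) : mono I ≤ mono J :=
  Ideal.span_mono fun f hf => ⟨hf.1, h hf.2⟩

theorem mem_of_forall_term {M : Ideal (MvPolynomial (Fin n) k)} {f : MvPolynomial (Fin n) k}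
    (h : ∀ s ∈ f.support, (monomial s 1 : MvPolynomial (Fin n) k) ∈ M) : f ∈ M := by
  have hf : f = ∑ s ∈ f.support, monomial s (coeff s f) := f.as_sum
  rw [hf]
  refine Ideal.sum_mem _ fun s hs => ?_
  have : (monomial s (coeff s f) : MvPolynomial (Fin n) k) = C (coeff s f) * monomial s 1 := by
    rw [C_mul_monomial, mul_one]
  rw [this]
  exact Ideal.mul_mem_left _ _ (h s hs)

theorem term_mem {M : Ideal (MvPolynomial (Fin n) k)} (hM : IsMonomialIdeal M)
    {f : MvPolynomial (Fin n) k} (hf : f ∈ M) {s : Fin n →₀ ℕ} (hs : s ∈ f.support) :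
    (monomial s 1 : MvPolynomial (Fin n) k) ∈ M := by
  classical
  rw [IsMonomialIdeal] at hM
  rw [← hM, mono] at hf
  refine Submodule.span_induction
    (p := fun g _ => ∀ t ∈ g.support, (monomial t 1 : MvPolynomial (Fin n) k) ∈ M)
    ?_ ?_ ?_ ?_ hf s hs
  · rintro g ⟨⟨t, rfl⟩, hgM⟩ u hu
    rw [support_monomial, if_neg (one_ne_zero : (1:k) ≠ 0), Finset.mem_singleton] at hu
    subst hu; exact hgM
  · intro t ht; simp at ht
  · intro x y _ _ ihx ihy t ht
    rcases Finset.mem_union.1 (support_add ht) with h | h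
    exacts [ihx t h, ihy t h]
  · intro a x _ ih t ht
    rw [smul_eq_mul] at ht
    obtain ⟨u, hu, v, hv, rfl⟩ := Finset.mem_add.1 (support_mul a x ht)
    have h2 : (monomial (u + v) 1 : MvPolynomial (Fin n) k) = monomial u 1 * monomial v 1 := by
      rw [monomial_mul, one_mul]
    rw [h2]
    exact Ideal.mul_mem_left _ _ (ih v hv)

theorem mul_monomial_mem_iff {M : Ideal (MvPolynomial (Fin n) k)} (hM : IsMonomialIdeal M)
    (s : Fin n →₀ ℕ) (g : MvPolynomial (Fin n) k) :
    g * monomial s 1 ∈ M ↔ ∀ w ∈ g.support, (monomial (w + s) 1 : MvPolynomial (Fin n) k) ∈ M := by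
  constructor
  · intro h w hw
    refine term_mem hM h ?_
    rw [mem_support_iff, coeff_mul_monomial, mul_one]
    exact mem_support_iff.1 hw
  · intro h
    refine mem_of_forall_term fun v hv => ?_
    rw [mem_support_iff, coeff_mul_monomial'] at hv
    split_ifs at hv with hle
    · have hvs : v - s + s = v := tsub_add_cancel_of_le hle
      rw [← hvs]
      refine h _ (mem_support_iff.2 ?_)
      intro hc; rw [hc, zero_mul] at hv; exact hv rfl
    · exact absurd rfl hv

theorem isHom_of_coeff_subset {f g : MvPolynomial (Fin n) k} {d : ℕ}
    (hf : f.IsHomogeneous d) (h : ∀ v, coeff v g ≠ 0 → coeff v f ≠ 0) :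
    g.IsHomogeneous d :=
  fun v hv => hf (h v hv)

/-- Core combinatorial lemma for the backward direction. -/
theorem backward_core {M : Ideal (MvPolynomial (Fin n) k)} (hM : IsMonomialIdeal M)
    {a b : Fin n →₀ ℕ} (hba : toLex b < toLex a)
    (hcol : ∀ w : Fin n →₀ ℕ, ((monomial (w + a) 1 : MvPolynomial (Fin n) k) ∈ M ↔
      (monomial (w + b) 1 : MvPolynomial (Fin n) k) ∈ M))
    {m : Fin n →₀ ℕ} {g p : MvPolynomial (Fin n) k} (hg : g ∈ M)
    (heq : (monomial m 1 : MvPolynomial (Fin n) k)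
      = g + p * ((monomial a 1 : MvPolynomial (Fin n) k) + monomial b 1)) :
    (monomial m 1 : MvPolynomial (Fin n) k) ∈ M := by
  classical
  by_contra hm
  set S : Finset (Fin n →₀ ℕ) :=
    p.support.filter (fun w => (monomial (w + a) 1 : MvPolynomial (Fin n) k) ∉ M) with hS
  have hco : ∀ v, ((monomial v 1 : MvPolynomial (Fin n) k) ∉ M) →
      (if m = v then (1:k) else 0) =
        coeff v (p * monomial a 1) + coeff v (p * monomial b 1) := by
    intro v hv
    have h1 : coeff v (monomial m 1 : MvPolynomial (Fin n) k)
        = coeff v g + (coeff v (p * monomial a 1) + coeff v (p * monomial b 1)) := by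
      rw [heq, mul_add, coeff_add, coeff_add]
    have h2 : coeff v g = 0 := by
      by_contra h
      exact hv (term_mem hM hg (mem_support_iff.2 h))
    rw [coeff_monomial, h2, zero_add] at h1
    exact h1
  by_cases hSe : S = ∅
  · apply hm
    have hall : ∀ w ∈ p.support, (monomial (w + a) 1 : MvPolynomial (Fin n) k) ∈ M := by
      intro w hw
      by_contra hc
      have : w ∈ S := Finset.mem_filter.2 ⟨hw, hc⟩
      rw [hSe] at this
      exact absurd this (Finset.notMem_empty w)
    have hpa : p * monomial a 1 ∈ M := (mul_monomial_mem_iff hM a p).2 hall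
    have hpb : p * monomial b 1 ∈ M := by
      refine (mul_monomial_mem_iff hM b p).2 fun w hw => ?_
      exact (hcol w).1 (hall w hw)
    rw [heq, mul_add]
    exact Ideal.add_mem _ hg (Ideal.add_mem _ hpa hpb)
  · have hSne : S.Nonempty := Finset.nonempty_iff_ne_empty.2 hSe
    obtain ⟨w₀, hw₀, hmax⟩ := Finset.exists_max_image S toLex hSne
    obtain ⟨w₁, hw₁, hmin⟩ := Finset.exists_min_image S toLex hSne
    have hw₀p : w₀ ∈ p.support := (Finset.mem_filter.1 hw₀).1
    have hw₀M : (monomial (w₀ + a) 1 : MvPolynomial (Fin n) k) ∉ M := (Finset.mem_filter.1 hw₀).2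
    have hw₁p : w₁ ∈ p.support := (Finset.mem_filter.1 hw₁).1
    have hw₁M : (monomial (w₁ + a) 1 : MvPolynomial (Fin n) k) ∉ M := (Finset.mem_filter.1 hw₁).2
    -- Step A : m = w₀ + a
    have hA : m = w₀ + a := by
      have h := hco (w₀ + a) hw₀M
      have ha1 : coeff (w₀ + a) (p * monomial a 1) = coeff w₀ p := by
        rw [coeff_mul_monomial, mul_one]
      have hb1 : coeff (w₀ + a) (p * monomial b 1) = 0 := by
        rw [coeff_mul_monomial']
        split_ifs with hle
        · rw [mul_one]
          by_contra hc
          set w' := w₀ + a - b with hw'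
          have hw'b : w' + b = w₀ + a := tsub_add_cancel_of_le hle
          have hw'S : w' ∈ S := by
            refine Finset.mem_filter.2 ⟨mem_support_iff.2 hc, ?_⟩
            intro hmem
            exact hw₀M (by rw [← hw'b]; exact (hcol w').1 hmem)
          have hle' : toLex w' ≤ toLex w₀ := hmax w' hw'S
          have hlt : toLex w₀ + toLex b < toLex w' + toLex b := by
            have : toLex w₀ + toLex b < toLex w₀ + toLex a := add_lt_add_right hba _
            calc toLex w₀ + toLex b < toLex w₀ + toLex a := this
              _ = toLex (w₀ + a) := rfl
              _ = toLex (w' + b) := by rw [hw'b]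
              _ = toLex w' + toLex b := rfl
          exact absurd (lt_of_add_lt_add_right hlt) (not_lt.2 hle')
        · rfl
      rw [ha1, hb1, add_zero] at h
      by_contra hne
      rw [if_neg hne] at h
      exact mem_support_iff.1 hw₀p h.symm
    -- Step B : m = w₁ + b, contradiction
    have hw₁bM : (monomial (w₁ + b) 1 : MvPolynomial (Fin n) k) ∉ M := by
      intro hmem
      exact hw₁M ((hcol w₁).2 hmem)
    have hB : m = w₁ + b := by
      have h := hco (w₁ + b) hw₁bM
      have hb1 : coeff (w₁ + b) (p * monomial b 1) = coeff w₁ p := by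
        rw [coeff_mul_monomial, mul_one]
      have ha1 : coeff (w₁ + b) (p * monomial a 1) = 0 := by
        rw [coeff_mul_monomial']
        split_ifs with hle
        · rw [mul_one]
          by_contra hc
          set w' := w₁ + b - a with hw'
          have hw'a : w' + a = w₁ + b := tsub_add_cancel_of_le hle
          have hw'S : w' ∈ S := by
            refine Finset.mem_filter.2 ⟨mem_support_iff.2 hc, ?_⟩
            rw [hw'a]; exact hw₁bM
          have hle' : toLex w₁ ≤ toLex w' := hmin w' hw'S
          have hlt : toLex w' + toLex a < toLex w₁ + toLex a := by
            calc toLex w' + toLex a = toLex (w' + a) := rfl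
              _ = toLex (w₁ + b) := by rw [hw'a]
              _ = toLex w₁ + toLex b := rfl
              _ < toLex w₁ + toLex a := add_lt_add_right hba _
          exact absurd (lt_of_add_lt_add_right hlt) (not_lt.2 hle')
        · rfl
      rw [ha1, hb1, zero_add] at h
      by_contra hne
      rw [if_neg hne] at h
      exact mem_support_iff.1 hw₁p h.symm
    -- contradiction
    have : toLex (w₁ + b) < toLex (w₀ + a) := by
      calc toLex (w₁ + b) = toLex w₁ + toLex b := rfl
        _ ≤ toLex w₀ + toLex b := add_le_add_left (hmin w₀ hw₀) _
        _ < toLex w₀ + toLex a := add_lt_add_right hba _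
        _ = toLex (w₀ + a) := rfl
    rw [← hA, ← hB] at this
    exact absurd this (lt_irrefl _)

theorem homog_sup {M : Ideal (MvPolynomial (Fin n) k)} (hM : IsMonomialIdeal M)
    {q : MvPolynomial (Fin n) k} {d : ℕ} (hq : q.IsHomogeneous d) :
    IsHomogeneousIdeal (M ⊔ Ideal.span {q}) := by
  intro f hf i
  obtain ⟨g, hg, h, hh, rfl⟩ := Submodule.mem_sup.1 hf
  obtain ⟨p, rfl⟩ := Ideal.mem_span_singleton'.1 hh
  rw [map_add]
  refine Submodule.add_mem _ ?_ ?_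
  · refine Submodule.mem_sup_left (mem_of_forall_term fun s hs => ?_)
    rw [mem_support_iff, coeff_homogeneousComponent] at hs
    split_ifs at hs with h'
    · exact term_mem hM hg (mem_support_iff.2 hs)
    · exact absurd rfl hs
  · refine Submodule.mem_sup_right ?_
    have hpq : p * q = ∑ j ∈ Finset.range (p.totalDegree + 1), homogeneousComponent j p * q := by
      rw [← Finset.sum_mul, sum_homogeneousComponent]
    rw [hpq, map_sum]
    refine Submodule.sum_mem _ fun j _ => ?_
    have hj : (homogeneousComponent j p * q) ∈ homogeneousSubmodule (Fin n) k (j + d) :=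
      (mem_homogeneousSubmodule _ _).2 ((homogeneousComponent_isHomogeneous j p).mul hq)
    rw [homogeneousComponent_of_mem hj]
    split_ifs
    · exact Ideal.mem_span_singleton'.2 ⟨homogeneousComponent j p, rfl⟩
    · exact Submodule.zero_mem _

theorem backward_exists {M : Ideal (MvPolynomial (Fin n) k)} (hM : IsMonomialIdeal M)
    {a b : Fin n →₀ ℕ} (hab : a ≠ b)
    (ha : (monomial a 1 : MvPolynomial (Fin n) k) ∉ M)
    (hd : Finsupp.degree a = Finsupp.degree b)
    (hcol : ∀ w : Fin n →₀ ℕ, ((monomial (w + a) 1 : MvPolynomial (Fin n) k) ∈ M ↔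
      (monomial (w + b) 1 : MvPolynomial (Fin n) k) ∈ M)) :
    ∃ I : Ideal (MvPolynomial (Fin n) k),
      IsHomogeneousIdeal I ∧ ¬ IsMonomialIdeal I ∧ mono I = M := by
  classical
  set q : MvPolynomial (Fin n) k := monomial a 1 + monomial b 1 with hq
  have hqhom : q.IsHomogeneous (Finsupp.degree a) := by
    have h1 : (monomial a 1 : MvPolynomial (Fin n) k) ∈
        homogeneousSubmodule (Fin n) k (Finsupp.degree a) :=
      (mem_homogeneousSubmodule _ _).2 (isHomogeneous_monomial _ rfl)
    have h2 : (monomial b 1 : MvPolynomial (Fin n) k) ∈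
        homogeneousSubmodule (Fin n) k (Finsupp.degree a) :=
      (mem_homogeneousSubmodule _ _).2 (isHomogeneous_monomial _ hd.symm)
    exact (mem_homogeneousSubmodule _ _).1 (Submodule.add_mem _ h1 h2)
  refine ⟨M ⊔ Ideal.span {q}, homog_sup hM hqhom, ?_, ?_⟩
  · -- not a monomial ideal
    intro hmono
    have hqI : q ∈ M ⊔ Ideal.span {q} :=
      Submodule.mem_sup_right (Ideal.subset_span rfl)
    -- mono (M ⊔ span {q}) = M (proved below inline)
    have hmonoLe : mono (M ⊔ Ideal.span {q}) ≤ M := by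
      refine Ideal.span_le.2 ?_
      rintro f ⟨⟨m, rfl⟩, hfI⟩
      obtain ⟨g, hg, h, hh, heq0⟩ := Submodule.mem_sup.1 hfI
      obtain ⟨p, rfl⟩ := Ideal.mem_span_singleton'.1 hh
      have heq : (monomial m 1 : MvPolynomial (Fin n) k) = g + p * (monomial a 1 + monomial b 1) :=
        heq0.symm
      have htl : toLex a ≠ toLex b := fun h' => hab (congrArg ofLex h')
      rcases htl.lt_or_gt with hlt | hlt
      · have heq' : (monomial m 1 : MvPolynomial (Fin n) k)
            = g + p * (monomial b 1 + monomial a 1) := by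
          rw [add_comm ((monomial b) 1 : MvPolynomial (Fin n) k)]
          exact heq
        exact backward_core hM hlt (fun w => (hcol w).symm) hg heq'
      · exact backward_core hM hlt hcol hg heq
    rw [IsMonomialIdeal] at hmono
    have hqM : q ∈ M := by
      refine hmonoLe ?_
      rw [hmono]
      exact hqI
    have haq : a ∈ q.support := by
      rw [mem_support_iff, hq, coeff_add, coeff_monomial, coeff_monomial, if_pos rfl,
        if_neg hab.symm, add_zero]
      exact one_ne_zero
    exact ha (term_mem hM hqM haq)
  · -- mono (M ⊔ span {q}) = M
    refine le_antisymm ?_ ?_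
    · refine Ideal.span_le.2 ?_
      rintro f ⟨⟨m, rfl⟩, hfI⟩
      obtain ⟨g, hg, h, hh, heq0⟩ := Submodule.mem_sup.1 hfI
      obtain ⟨p, rfl⟩ := Ideal.mem_span_singleton'.1 hh
      have heq : (monomial m 1 : MvPolynomial (Fin n) k) = g + p * (monomial a 1 + monomial b 1) :=
        heq0.symm
      have htl : toLex a ≠ toLex b := fun h' => hab (congrArg ofLex h')
      rcases htl.lt_or_gt with hlt | hlt
      · have heq' : (monomial m 1 : MvPolynomial (Fin n) k)
            = g + p * (monomial b 1 + monomial a 1) := by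
          rw [add_comm ((monomial b) 1 : MvPolynomial (Fin n) k)]
          exact heq
        exact backward_core hM hlt (fun w => (hcol w).symm) hg heq'
      · exact backward_core hM hlt hcol hg heq
    · calc M = mono M := hM.symm
        _ ≤ mono (M ⊔ Ideal.span {q}) := mono_mono le_sup_left

theorem monomial_coeff_mem {M : Ideal (MvPolynomial (Fin n) k)} {s : Fin n →₀ ℕ}
    (h : (monomial s 1 : MvPolynomial (Fin n) k) ∈ M) (c : k) :
    (monomial s c : MvPolynomial (Fin n) k) ∈ M := by
  have : (monomial s c : MvPolynomial (Fin n) k) = C c * monomial s 1 := by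
    rw [C_mul_monomial, mul_one]
  rw [this]
  exact Ideal.mul_mem_left _ _ h

theorem forward_exists {M I : Ideal (MvPolynomial (Fin n) k)} (hM : IsMonomialIdeal M)
    (hIh : IsHomogeneousIdeal I) (hInm : ¬ IsMonomialIdeal I) (hmono : mono I = M) :
    ∃ s₁ s₂ : Fin n →₀ ℕ, s₁ ≠ s₂ ∧
      (monomial s₁ 1 : MvPolynomial (Fin n) k) ∉ M ∧
      (monomial s₂ 1 : MvPolynomial (Fin n) k) ∉ M ∧
      Finsupp.degree s₁ = Finsupp.degree s₂ ∧
      (∀ w : Fin n →₀ ℕ, ((monomial (w + s₁) 1 : MvPolynomial (Fin n) k) ∈ M ↔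
        (monomial (w + s₂) 1 : MvPolynomial (Fin n) k) ∈ M)) := by
  classical
  have hMI : M ≤ I := hmono ▸ mono_le I
  have hne : M ≠ I := by
    intro h
    exact hInm (by rw [IsMonomialIdeal, hmono, h])
  obtain ⟨f₀, hf₀I, hf₀M⟩ := SetLike.exists_of_lt (lt_of_le_of_ne hMI hne)
  -- find a homogeneous element of I not in M
  have hexists : ∃ h : MvPolynomial (Fin n) k,
      h ∈ I ∧ h ∉ M ∧ ∃ d : ℕ, h.IsHomogeneous d := by
    by_contra hc
    apply hf₀M
    have : f₀ = ∑ i ∈ Finset.range (f₀.totalDegree + 1), homogeneousComponent i f₀ :=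
      (sum_homogeneousComponent f₀).symm
    rw [this]
    refine Ideal.sum_mem _ fun i _ => ?_
    by_contra hcm
    exact hc ⟨homogeneousComponent i f₀, hIh f₀ hf₀I i, hcm,
      i, homogeneousComponent_isHomogeneous i f₀⟩
  -- choose one with minimal support cardinality
  have hCne : ∃ c : ℕ, ∃ h : MvPolynomial (Fin n) k,
      (h ∈ I ∧ h ∉ M ∧ ∃ d : ℕ, h.IsHomogeneous d) ∧ h.support.card = c := by
    obtain ⟨h, hh⟩ := hexists
    exact ⟨h.support.card, h, hh, rfl⟩
  set c₀ := Nat.find hCne with hc₀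
  obtain ⟨f, ⟨hfI, hfM, d, hfhom⟩, hfcard⟩ := Nat.find_spec hCne
  have hminimal : ∀ h : MvPolynomial (Fin n) k,
      h ∈ I → h ∉ M → (∃ d : ℕ, h.IsHomogeneous d) → c₀ ≤ h.support.card := by
    intro h h1 h2 h3
    exact Nat.find_min' hCne ⟨h, ⟨h1, h2, h3⟩, rfl⟩
  have hfne : f ≠ 0 := fun h => hfM (h ▸ Submodule.zero_mem M)
  have hsuppne : f.support.Nonempty := support_nonempty.2 hfne
  -- (i) no monomial of f lies in M
  have hterm : ∀ s ∈ f.support, (monomial s 1 : MvPolynomial (Fin n) k) ∉ M := by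
    by_contra hc
    push_neg at hc
    obtain ⟨s₀, hs₀, hs₀M⟩ := hc
    set T := f.support.filter (fun s => (monomial s 1 : MvPolynomial (Fin n) k) ∉ M) with hT
    set g := ∑ s ∈ T, (monomial s (coeff s f) : MvPolynomial (Fin n) k) with hgdef
    have hcoeffg : ∀ v, coeff v g = if v ∈ T then coeff v f else 0 := by
      intro v
      rw [hgdef, coeff_sum]
      simp_rw [coeff_monomial]
      exact Finset.sum_ite_eq' T v _
    have hsplit : f = (∑ s ∈ f.support.filter
          (fun s => ¬ (monomial s 1 : MvPolynomial (Fin n) k) ∉ M),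
          (monomial s (coeff s f) : MvPolynomial (Fin n) k)) + g := by
      rw [hgdef, hT, Finset.sum_filter_not_add_sum_filter]
      exact f.as_sum
    set g' := ∑ s ∈ f.support.filter
        (fun s => ¬ (monomial s 1 : MvPolynomial (Fin n) k) ∉ M),
        (monomial s (coeff s f) : MvPolynomial (Fin n) k) with hg'
    have hg'M : g' ∈ M := by
      refine Ideal.sum_mem _ fun s hs => ?_
      have := (Finset.mem_filter.1 hs).2
      rw [not_not] at this
      exact monomial_coeff_mem this _
    have hgI : g ∈ I := by
      have : g = f - g' := by rw [hsplit]; ring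
      rw [this]
      exact Submodule.sub_mem _ hfI (hMI hg'M)
    have hgM : g ∉ M := by
      intro hcm
      exact hfM (hsplit ▸ Submodule.add_mem _ hg'M hcm)
    have hghom : g.IsHomogeneous d := by
      refine isHom_of_coeff_subset hfhom fun v hv => ?_
      rw [hcoeffg] at hv
      split_ifs at hv with h'
      · exact hv
      · exact absurd rfl hv
    have hcard : g.support.card < f.support.card := by
      have hsub : g.support ⊆ f.support.erase s₀ := by
        intro v hv
        rw [mem_support_iff, hcoeffg] at hv
        split_ifs at hv with h'
        · refine Finset.mem_erase.2 ⟨?_, (Finset.mem_filter.1 h').1⟩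
          intro hvs
          exact (Finset.mem_filter.1 h').2 (hvs ▸ hs₀M)
        · exact absurd rfl hv
      calc g.support.card ≤ (f.support.erase s₀).card := Finset.card_le_card hsub
        _ < f.support.card := Finset.card_erase_lt_of_mem hs₀
    exact absurd (hminimal g hgI hgM ⟨d, hghom⟩) (by omega)
  -- (ii) f has at least two monomials
  have htwo : 1 < f.support.card := by
    rcases Nat.lt_or_ge 1 f.support.card with h | h
    · exact h
    · exfalso
      have h1 : f.support.card = 1 := by
        have := Finset.card_pos.2 hsuppne
        omega
      obtain ⟨s, hs⟩ := Finset.card_eq_one.1 h1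
      have hsf : s ∈ f.support := hs ▸ Finset.mem_singleton_self s
      set c := coeff s f with hcdef
      have hfeq : f = monomial s c := by
        have := f.as_sum
        rw [hs, Finset.sum_singleton] at this
        rw [this]
      have hcne : c ≠ 0 := mem_support_iff.1 hsf
      have hmI : (monomial s 1 : MvPolynomial (Fin n) k) ∈ I := by
        have : (monomial s 1 : MvPolynomial (Fin n) k) = C c⁻¹ * f := by
          rw [hfeq, C_mul_monomial, inv_mul_cancel₀ hcne]
        rw [this]
        exact Ideal.mul_mem_left _ _ hfI
      have : (monomial s 1 : MvPolynomial (Fin n) k) ∈ M := by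
        rw [← hmono]
        exact Ideal.subset_span ⟨⟨s, rfl⟩, hmI⟩
      exact hterm s hsf this
  obtain ⟨s₁, hs₁, s₂, hs₂, hne12⟩ := Finset.one_lt_card.1 htwo
  -- key exchange property
  have key : ∀ w : Fin n →₀ ℕ, ∀ t₁ ∈ f.support,
      (monomial (w + t₁) 1 : MvPolynomial (Fin n) k) ∈ M →
      ∀ t₂ ∈ f.support, (monomial (w + t₂) 1 : MvPolynomial (Fin n) k) ∈ M := by
    intro w t₁ ht₁ ht₁M t₂ ht₂
    by_contra ht₂M
    set T := f.support.filter
      (fun s => (monomial (w + s) 1 : MvPolynomial (Fin n) k) ∉ M) with hT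
    set g := ∑ s ∈ T, (monomial (w + s) (coeff s f) : MvPolynomial (Fin n) k) with hgdef
    have hcoeffg : ∀ v, coeff (w + v) g = if v ∈ T then coeff v f else 0 := by
      intro v
      rw [hgdef, coeff_sum]
      simp_rw [coeff_monomial]
      rw [← Finset.sum_ite_eq' T v (fun s => coeff s f)]
      refine Finset.sum_congr rfl fun s _ => ?_
      congr 1
      exact propext (add_right_inj w)
    have hsplit : monomial w 1 * f = (∑ s ∈ f.support.filter
          (fun s => ¬ (monomial (w + s) 1 : MvPolynomial (Fin n) k) ∉ M),
          (monomial (w + s) (coeff s f) : MvPolynomial (Fin n) k)) + g := by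
      rw [hgdef, hT, Finset.sum_filter_not_add_sum_filter]
      have : monomial w 1 * f = ∑ s ∈ f.support,
          (monomial (w + s) (coeff s f) : MvPolynomial (Fin n) k) := by
        nth_rewrite 1 [f.as_sum]
        rw [Finset.mul_sum]
        refine Finset.sum_congr rfl fun s _ => ?_
        rw [monomial_mul, one_mul]
      exact this
    set g' := ∑ s ∈ f.support.filter
        (fun s => ¬ (monomial (w + s) 1 : MvPolynomial (Fin n) k) ∉ M),
        (monomial (w + s) (coeff s f) : MvPolynomial (Fin n) k) with hg'
    have hg'M : g' ∈ M := by
      refine Ideal.sum_mem _ fun s hs => ?_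
      have := (Finset.mem_filter.1 hs).2
      rw [not_not] at this
      exact monomial_coeff_mem this _
    have hgI : g ∈ I := by
      have : g = monomial w 1 * f - g' := by rw [hsplit]; ring
      rw [this]
      exact Submodule.sub_mem _ (Ideal.mul_mem_left _ _ hfI) (hMI hg'M)
    have hgsupp : g.support ⊆ T.image (fun s => w + s) := by
      intro v hv
      rw [mem_support_iff, hgdef, coeff_sum] at hv
      obtain ⟨s, hsT, hsne⟩ := Finset.exists_ne_zero_of_sum_ne_zero hv
      rw [coeff_monomial] at hsne
      split_ifs at hsne with h'
      · exact Finset.mem_image.2 ⟨s, hsT, h'⟩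
      · exact absurd rfl hsne
    have hcard : g.support.card < f.support.card := by
      have h1 : t₁ ∉ T := fun h => (Finset.mem_filter.1 h).2 ht₁M
      have hsub : T ⊆ f.support.erase t₁ := by
        intro s hs
        exact Finset.mem_erase.2 ⟨fun h => h1 (h ▸ hs), (Finset.mem_filter.1 hs).1⟩
      calc g.support.card ≤ (T.image (fun s => w + s)).card := Finset.card_le_card hgsupp
        _ ≤ T.card := Finset.card_image_le
        _ ≤ (f.support.erase t₁).card := Finset.card_le_card hsub
        _ < f.support.card := Finset.card_erase_lt_of_mem ht₁
    have hghom : g.IsHomogeneous (Finsupp.degree w + d) := by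
      have hwf : (monomial w 1 * f).IsHomogeneous (Finsupp.degree w + d) :=
        (isHomogeneous_monomial (1 : k) rfl).mul hfhom
      refine isHom_of_coeff_subset hwf fun v hv => ?_
      have hvs : v ∈ g.support := mem_support_iff.2 hv
      obtain ⟨s, hsT, rfl⟩ := Finset.mem_image.1 (hgsupp hvs)
      rw [coeff_monomial_mul, one_mul]
      have hsf : s ∈ f.support := (Finset.mem_filter.1 hsT).1
      exact mem_support_iff.1 hsf
    have hgM : g ∈ M := by
      by_contra hgM
      exact absurd (hminimal g hgI hgM ⟨_, hghom⟩) (by omega)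
    have ht₂T : t₂ ∈ T := Finset.mem_filter.2 ⟨ht₂, ht₂M⟩
    have : (w + t₂) ∈ g.support := by
      rw [mem_support_iff, hcoeffg, if_pos ht₂T]
      exact mem_support_iff.1 ht₂
    exact ht₂M (term_mem hM hgM this)
  refine ⟨s₁, s₂, hne12, hterm s₁ hs₁, hterm s₂ hs₂, ?_, ?_⟩
  · have h1 : Finsupp.weight 1 s₁ = d := hfhom (mem_support_iff.1 hs₁)
    have h2 : Finsupp.weight 1 s₂ = d := hfhom (mem_support_iff.1 hs₂)
    rw [Finsupp.degree_eq_weight_one]; exact h1.trans h2.symm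
  · intro w
    constructor
    · intro h
      exact key w s₁ hs₁ h s₂ hs₂
    · intro h
      exact key w s₂ hs₂ h s₁ hs₁

end Aux

theorem mono_characterization {k : Type*} [Field k] {n : ℕ}
    (M : Ideal (MvPolynomial (Fin n) k)) (hM : IsMonomialIdeal M) :
    (∃ I : Ideal (MvPolynomial (Fin n) k),
        IsHomogeneousIdeal I ∧ ¬ IsMonomialIdeal I ∧ mono I = M) ↔
      (∃ u₁ u₂ : MvPolynomial (Fin n) k, IsMonomial u₁ ∧ IsMonomial u₂ ∧ u₁ ≠ u₂ ∧
        u₁ ∉ M ∧ u₂ ∉ M ∧ u₁.totalDegree = u₂.totalDegree ∧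
        Submodule.colon M (Ideal.span {u₁}) = Submodule.colon M (Ideal.span {u₂})) := by
  classical
  constructor
  · rintro ⟨I, hIh, hInm, hmono⟩
    obtain ⟨s₁, s₂, hne12, h1, h2, hdeg, hcol⟩ := forward_exists hM hIh hInm hmono
    refine ⟨monomial s₁ 1, monomial s₂ 1, ⟨s₁, rfl⟩, ⟨s₂, rfl⟩, ?_, h1, h2, ?_, ?_⟩
    · intro h
      rcases (monomial_eq_monomial_iff _ _ _ _).1 h with ⟨h', _⟩ | ⟨h', _⟩
      · exact hne12 h'
      · exact one_ne_zero h'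
    · rw [totalDegree_monomial _ (one_ne_zero : (1:k) ≠ 0),
        totalDegree_monomial _ (one_ne_zero : (1:k) ≠ 0)]
      exact hdeg
    · ext g
      constructor
      · intro h
        refine Ideal.mem_colon_span_singleton.2 ?_
        have h' := Ideal.mem_colon_span_singleton.1 h
        rw [mul_monomial_mem_iff hM] at h' ⊢
        intro w hw
        exact (hcol w).1 (h' w hw)
      · intro h
        refine Ideal.mem_colon_span_singleton.2 ?_
        have h' := Ideal.mem_colon_span_singleton.1 h
        rw [mul_monomial_mem_iff hM] at h' ⊢
        intro w hw
        exact (hcol w).2 (h' w hw)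
  · rintro ⟨u₁, u₂, ⟨a, rfl⟩, ⟨b, rfl⟩, hne, h1, h2, hdeg, hcol⟩
    have hab : a ≠ b := fun h => hne (by rw [h])
    have hd : Finsupp.degree a = Finsupp.degree b := by
      rw [totalDegree_monomial _ (one_ne_zero : (1:k) ≠ 0),
        totalDegree_monomial _ (one_ne_zero : (1:k) ≠ 0)] at hdeg
      exact hdeg
    have hcol' : ∀ w : Fin n →₀ ℕ,
        ((monomial (w + a) 1 : MvPolynomial (Fin n) k) ∈ M ↔
          (monomial (w + b) 1 : MvPolynomial (Fin n) k) ∈ M) := by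
      intro w
      have e1 : (monomial (w + a) 1 : MvPolynomial (Fin n) k)
          = monomial w 1 * monomial a 1 := by rw [monomial_mul, one_mul]
      have e2 : (monomial (w + b) 1 : MvPolynomial (Fin n) k)
          = monomial w 1 * monomial b 1 := by rw [monomial_mul, one_mul]
      rw [e1, e2]
      constructor
      · intro h
        have hm : (monomial w 1 : MvPolynomial (Fin n) k)
            ∈ Submodule.colon M (Ideal.span {(monomial a 1 : MvPolynomial (Fin n) k)}) :=
          Ideal.mem_colon_span_singleton.2 h
        rw [hcol] at hm
        exact Ideal.mem_colon_span_singleton.1 hm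
      · intro h
        have hm : (monomial w 1 : MvPolynomial (Fin n) k)
            ∈ Submodule.colon M (Ideal.span {(monomial b 1 : MvPolynomial (Fin n) k)}) :=
          Ideal.mem_colon_span_singleton.2 h
        rw [← hcol] at hm
        exact Ideal.mem_colon_span_singleton.1 hm
    exact backward_exists hM hab h1 hd hcol'
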